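/- Let ℏ, z ∈ ℂ with ℏ ≠ 0 and assume (z + ℏ/2)/ℏ is not an integer. Then i·G(−z) · (1 + i·exp(iπz/ℏ)) = G(z) · (i·exp(iπz/ℏ) − 1). Equivalently, the two non-perturbative completions G(z) and i·G(−z) of the Q-operator normalizing factor differ by the multiplicative factor (i·exp(iπz/ℏ) − 1)/(1 + i·exp(iπz/ℏ)), a trigonometric function of z/ℏ. (This is the relation, stated in the paper up to an overall sign, showing that the two completions agree up to exponentially suppressed terms.) -/

import Mathlib

open Complex

/-- The normalizing factor `G(z)` of the 't Hooft line / Q-operator. -/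
noncomputable def Gnorm (ℏ z : ℂ) : ℂ :=
  (2*ℏ) ^ (-(1/2 : ℂ)) * Complex.Gamma ((z + ℏ/2) / (2*ℏ)) /
    Complex.Gamma ((z + 3*ℏ/2) / (2*ℏ))

/-- the two non-perturbative completions `G(z)` and `i·G(−z)` differ by
the trigonometric factor `(i e^{iπz/ℏ} − 1)/(1 + i e^{iπz/ℏ})`:
`i G(−z) (1 + i e^{iπz/ℏ}) = G(z) (i e^{iπz/ℏ} − 1)`. -/
theorem I_Gnorm_neg_trig_relation (ℏ z : ℂ) (hℏ : ℏ ≠ 0)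
    (h : ∀ n : ℤ, (z + ℏ/2) / ℏ ≠ (n : ℂ)) :
    Complex.I * Gnorm ℏ (-z) *
        (1 + Complex.I * Complex.exp (Complex.I * (Real.pi : ℂ) * z / ℏ))
      = Gnorm ℏ z *
        (Complex.I * Complex.exp (Complex.I * (Real.pi : ℂ) * z / ℏ) - 1) := by
  have h2ℏ : (2 * ℏ : ℂ) ≠ 0 := mul_ne_zero two_ne_zero hℏ
  set s : ℂ := (z + ℏ/2) / (2*ℏ) with hs
  have hπ : (Real.pi : ℂ) ≠ 0 := by exact_mod_cast Real.pi_ne_zero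
  have hI2 : (Complex.I : ℂ) ^ 2 = -1 := Complex.I_sq
  -- 2s is not an integer
  have h2s : ∀ n : ℤ, (2 : ℂ) * s ≠ (n : ℂ) := by
    intro n hn
    apply h n
    rw [hs] at hn
    field_simp at hn ⊢
    linear_combination hn
  have hsin : Complex.sin ((Real.pi : ℂ) * s) ≠ 0 := by
    intro hc
    rw [Complex.sin_eq_zero_iff] at hc
    obtain ⟨k, hk⟩ := hc
    apply h2s (2 * k)
    have hsk : s = (k : ℂ) := by
      apply mul_left_cancel₀ hπ
      rw [hk]; ring
    rw [hsk]; push_cast; ring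
  have hcos : Complex.cos ((Real.pi : ℂ) * s) ≠ 0 := by
    intro hc
    rw [Complex.cos_eq_zero_iff] at hc
    obtain ⟨k, hk⟩ := hc
    apply h2s (2 * k + 1)
    have hsk : s = (2 * (k : ℂ) + 1) / 2 := by
      apply mul_left_cancel₀ hπ
      rw [hk]; ring
    rw [hsk]; push_cast; ring
  have hrefl1 : Complex.Gamma s * Complex.Gamma (1 - s)
      = (Real.pi : ℂ) / Complex.sin ((Real.pi : ℂ) * s) :=
    Complex.Gamma_mul_Gamma_one_sub s
  have hrefl2 : Complex.Gamma (s + 1/2) * Complex.Gamma (1/2 - s)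
      = (Real.pi : ℂ) / Complex.cos ((Real.pi : ℂ) * s) := by
    have h0 := Complex.Gamma_mul_Gamma_one_sub (s + 1/2)
    rw [show (1 : ℂ) - (s + 1/2) = 1/2 - s by ring] at h0
    rw [h0]
    congr 1
    rw [show (Real.pi : ℂ) * (s + 1/2) = (Real.pi : ℂ)/2 + (Real.pi : ℂ) * s by ring,
      Complex.sin_add, Complex.sin_pi_div_two, Complex.cos_pi_div_two]
    ring
  have hprod1 : Complex.Gamma s * Complex.Gamma (1 - s) ≠ 0 := by
    rw [hrefl1]; exact div_ne_zero hπ hsin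
  have hprod2 : Complex.Gamma (s + 1/2) * Complex.Gamma (1/2 - s) ≠ 0 := by
    rw [hrefl2]; exact div_ne_zero hπ hcos
  have hG1 : Complex.Gamma s ≠ 0 := left_ne_zero_of_mul hprod1
  have hG2 : Complex.Gamma (1 - s) ≠ 0 := right_ne_zero_of_mul hprod1
  have hG3 : Complex.Gamma (s + 1/2) ≠ 0 := left_ne_zero_of_mul hprod2
  have hG4 : Complex.Gamma (1/2 - s) ≠ 0 := right_ne_zero_of_mul hprod2
  have e1 : (z + 3*ℏ/2) / (2*ℏ) = s + 1/2 := by rw [hs]; field_simp; ring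
  have e2 : (-z + ℏ/2) / (2*ℏ) = 1/2 - s := by rw [hs]; field_simp; ring
  have e3 : (-z + 3*ℏ/2) / (2*ℏ) = 1 - s := by rw [hs]; field_simp; ring
  have hGz : Gnorm ℏ z = (2*ℏ) ^ (-(1/2 : ℂ)) * Complex.Gamma s / Complex.Gamma (s + 1/2) := by
    rw [Gnorm, e1, hs]
  have hGnz : Gnorm ℏ (-z)
      = (2*ℏ) ^ (-(1/2 : ℂ)) * Complex.Gamma (1/2 - s) / Complex.Gamma (1 - s) := by
    rw [Gnorm, e2, e3]
  -- the exponential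
  set a : ℂ := Complex.exp ((Real.pi : ℂ) * s * I) with ha
  have ha0 : a ≠ 0 := Complex.exp_ne_zero _
  have hinv : a * a⁻¹ = 1 := mul_inv_cancel₀ ha0
  have hexp : Complex.I * Complex.exp (Complex.I * (Real.pi : ℂ) * z / ℏ) = a ^ 2 := by
    have hz : Complex.I * (Real.pi : ℂ) * z / ℏ
        = ((Real.pi : ℂ) * s * I + (Real.pi : ℂ) * s * I) + (-((Real.pi : ℂ)/2)) * I := by
      rw [hs]; field_simp; ring
    have hI4 : Complex.exp ((-((Real.pi : ℂ)/2)) * I) = -Complex.I := by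
      rw [Complex.exp_mul_I, Complex.cos_neg, Complex.sin_neg,
        Complex.cos_pi_div_two, Complex.sin_pi_div_two]
      ring
    rw [hz, Complex.exp_add, Complex.exp_add, hI4, ha, sq]
    linear_combination (-(Complex.exp ((Real.pi : ℂ) * s * I) *
      Complex.exp ((Real.pi : ℂ) * s * I))) * Complex.I_mul_I
  have hsina : Complex.sin ((Real.pi : ℂ) * s) = (a⁻¹ - a) * Complex.I / 2 := by
    rw [Complex.sin, ha, ← Complex.exp_neg]
    ring_nf
  have hcosa : Complex.cos ((Real.pi : ℂ) * s) = (a + a⁻¹) / 2 := by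
    rw [Complex.cos, ha, ← Complex.exp_neg]
    ring_nf
  have hIsin : Complex.I * Complex.sin ((Real.pi : ℂ) * s) = (a - a⁻¹) / 2 := by
    rw [hsina]
    linear_combination ((a⁻¹ - a)/2) * hI2
  -- the key trigonometric identity
  have key : Complex.I * (Complex.Gamma (1/2 - s) * Complex.Gamma (s + 1/2)) * (1 + a^2)
      = (Complex.Gamma s * Complex.Gamma (1 - s)) * (a^2 - 1) := by
    rw [hrefl1, show Complex.Gamma (1/2 - s) * Complex.Gamma (s + 1/2)
        = Complex.Gamma (s + 1/2) * Complex.Gamma (1/2 - s) by ring, hrefl2]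
    field_simp
    linear_combination (1 + a^2) * hIsin
      - (a^2 - 1) * hcosa - a * hinv
  rw [hGz, hGnz, hexp]
  set c : ℂ := (2*ℏ) ^ (-(1/2 : ℂ)) with hc
  set G1 := Complex.Gamma s with hg1
  set G2 := Complex.Gamma (s + 1/2) with hg2
  set G3 := Complex.Gamma (1/2 - s) with hg3
  set G4 := Complex.Gamma (1 - s) with hg4
  field_simp
  linear_combination c * key
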